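/- Let X be a real inner product space and S a finite set of n ≥ 2 points in X. Then there is a partition of S into two sets S₁, S₂ with |S₁| = ⌊n/2⌋ and |S₂| = ⌈n/2⌉ such that ‖c(S₁) − c(S₂)‖ ≤ 2^{1/2} · ⌈n/2⌉^{−1/2} · diam S, where c(T) = (1/|T|) ∑_{t∈T} t is the centroid of T. -/

import Mathlib

open Finset

section Aux

variable {X : Type*} [DecidableEq X]

lemma maurey_count_one (S : Finset X) (m : ℕ) (hm : 1 ≤ m) {i : X} (hi : i ∈ S) :
    ((S.powersetCard m).filter (fun T => i ∈ T)).card = (S.card - 1).choose (m - 1) := by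
  rw [← Finset.card_erase_of_mem hi, ← Finset.card_powersetCard]
  apply Finset.card_nbij' (fun T => T.erase i) (fun U => insert i U)
  · intro T hT
    simp only [Finset.mem_coe, Finset.mem_filter, Finset.mem_powersetCard] at hT
    rw [Finset.mem_coe, Finset.mem_powersetCard]
    exact ⟨Finset.erase_subset_erase _ hT.1.1, by rw [Finset.card_erase_of_mem hT.2, hT.1.2]⟩
  · intro U hU
    rw [Finset.mem_coe, Finset.mem_powersetCard] at hU
    have hiU : i ∉ U := fun h => Finset.notMem_erase i S (hU.1 h)
    simp only [Finset.mem_coe, Finset.mem_filter, Finset.mem_powersetCard]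
    refine ⟨⟨?_, ?_⟩, Finset.mem_insert_self i U⟩
    · intro x hx
      rcases Finset.mem_insert.mp hx with h | h
      · exact h ▸ hi
      · exact Finset.mem_of_mem_erase (hU.1 h)
    · rw [Finset.card_insert_of_notMem hiU, hU.2]; omega
  · intro T hT
    simp only [Finset.mem_coe, Finset.mem_filter] at hT
    exact Finset.insert_erase hT.2
  · intro U hU
    rw [Finset.mem_coe, Finset.mem_powersetCard] at hU
    exact Finset.erase_insert (fun h => Finset.notMem_erase i S (hU.1 h))

lemma maurey_count_two (S : Finset X) (m : ℕ) (hm : 2 ≤ m) {i j : X}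
    (hi : i ∈ S) (hj : j ∈ S) (hij : i ≠ j) :
    ((S.powersetCard m).filter (fun T => i ∈ T ∧ j ∈ T)).card = (S.card - 2).choose (m - 2) := by
  have hcard : ((S.erase i).erase j).card = S.card - 2 := by
    rw [Finset.card_erase_of_mem (Finset.mem_erase.mpr ⟨hij.symm, hj⟩), Finset.card_erase_of_mem hi]; omega
  rw [← hcard, ← Finset.card_powersetCard]
  apply Finset.card_nbij' (fun T => (T.erase i).erase j) (fun U => insert i (insert j U))
  · intro T hT
    simp only [Finset.mem_coe, Finset.mem_filter, Finset.mem_powersetCard] at hT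
    rw [Finset.mem_coe, Finset.mem_powersetCard]
    constructor
    · exact Finset.erase_subset_erase _ (Finset.erase_subset_erase _ hT.1.1)
    · rw [Finset.card_erase_of_mem (Finset.mem_erase.mpr ⟨hij.symm, hT.2.2⟩),
        Finset.card_erase_of_mem hT.2.1, hT.1.2]; omega
  · intro U hU
    rw [Finset.mem_coe, Finset.mem_powersetCard] at hU
    have hjU : j ∉ U := fun h => Finset.notMem_erase j _ (hU.1 h)
    have hiU : i ∉ insert j U := by
      intro h
      rcases Finset.mem_insert.mp h with h | h
      · exact hij h
      · exact Finset.notMem_erase i S (Finset.mem_of_mem_erase (hU.1 h) : i ∈ S.erase i)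
    simp only [Finset.mem_coe, Finset.mem_filter, Finset.mem_powersetCard]
    refine ⟨⟨?_, ?_⟩, Finset.mem_insert_self i _, Finset.mem_insert_of_mem (Finset.mem_insert_self j U)⟩
    · intro x hx
      rcases Finset.mem_insert.mp hx with h | h
      · exact h ▸ hi
      rcases Finset.mem_insert.mp h with h | h
      · exact h ▸ hj
      · exact Finset.mem_of_mem_erase (Finset.mem_of_mem_erase (hU.1 h))
    · rw [Finset.card_insert_of_notMem hiU, Finset.card_insert_of_notMem hjU, hU.2]; omega
  · intro T hT
    simp only [Finset.mem_coe, Finset.mem_filter] at hT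
    dsimp only
    rw [Finset.insert_erase (Finset.mem_erase.mpr ⟨hij.symm, hT.2.2⟩), Finset.insert_erase hT.2.1]
  · intro U hU
    rw [Finset.mem_coe, Finset.mem_powersetCard] at hU
    have hjU : j ∉ U := fun h => Finset.notMem_erase j _ (hU.1 h)
    have hiU : i ∉ insert j U := by
      intro h
      rcases Finset.mem_insert.mp h with h | h
      · exact hij h
      · exact Finset.notMem_erase i S (Finset.mem_of_mem_erase (hU.1 h))
    dsimp only
    rw [Finset.erase_insert hiU, Finset.erase_insert hjU]

end Aux

lemma maurey_key_identity {X : Type*} [DecidableEq X] [NormedAddCommGroup X] [InnerProductSpace ℝ X]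
    (S : Finset X) (y : X → X) (hy : ∑ x ∈ S, y x = 0) (m : ℕ) (hm : 2 ≤ m) (hmn : m ≤ S.card) :
    ∑ T ∈ S.powersetCard m, ‖∑ x ∈ T, y x‖ ^ 2
      = ((S.card - 2).choose (m - 1) : ℝ) * ∑ x ∈ S, ‖y x‖ ^ 2 := by
  classical
  have step1 : ∀ T ∈ S.powersetCard m, ‖∑ x ∈ T, y x‖ ^ 2
      = ∑ i ∈ S, ∑ j ∈ S, (if i ∈ T ∧ j ∈ T then (inner ℝ (y i) (y j) : ℝ) else 0) := by
    intro T hT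
    rw [Finset.mem_powersetCard] at hT
    have hsub : ∀ (f : X → ℝ), ∑ i ∈ T, f i = ∑ i ∈ S, if i ∈ T then f i else 0 := by
      intro f
      rw [← Finset.sum_filter, Finset.filter_mem_eq_inter, Finset.inter_eq_right.mpr hT.1]
    rw [← real_inner_self_eq_norm_sq, sum_inner, hsub]
    refine Finset.sum_congr rfl fun i _ => ?_
    by_cases hiT : i ∈ T
    · simp only [hiT, if_true, true_and, inner_sum]
      rw [hsub]
    · simp [hiT]
  rw [Finset.sum_congr rfl step1, Finset.sum_comm]
  have hswap : ∀ i ∈ S, ∑ T ∈ S.powersetCard m, ∑ j ∈ S,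
        (if i ∈ T ∧ j ∈ T then (inner ℝ (y i) (y j) : ℝ) else 0)
      = ∑ j ∈ S, ∑ T ∈ S.powersetCard m,
        (if i ∈ T ∧ j ∈ T then (inner ℝ (y i) (y j) : ℝ) else 0) := fun i _ => Finset.sum_comm
  rw [Finset.sum_congr rfl hswap]
  have hcount : ∀ (p : Finset X → Prop) [DecidablePred p] (v : ℝ),
      ∑ T ∈ S.powersetCard m, (if p T then v else 0)
        = (((S.powersetCard m).filter p).card : ℝ) * v := by
    intro p _ v
    rw [← Finset.sum_filter, Finset.sum_const, nsmul_eq_mul]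
  have pascal : ((S.card - 1).choose (m - 1) : ℝ)
      = (S.card - 2).choose (m - 2) + (S.card - 2).choose (m - 1) := by
    rw [show S.card - 1 = (S.card - 2) + 1 by omega, show m - 1 = (m - 2) + 1 by omega,
      Nat.choose_succ_succ]
    push_cast; ring
  have hper : ∀ i ∈ S, ∑ j ∈ S, ∑ T ∈ S.powersetCard m,
        (if i ∈ T ∧ j ∈ T then (inner ℝ (y i) (y j) : ℝ) else 0)
      = ((S.card - 2).choose (m - 1) : ℝ) * ‖y i‖ ^ 2 := by
    intro i hi
    rw [← Finset.add_sum_erase _ _ hi]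
    have hdiag : ∑ T ∈ S.powersetCard m, (if i ∈ T ∧ i ∈ T then (inner ℝ (y i) (y i) : ℝ) else 0)
        = ((S.card - 1).choose (m - 1) : ℝ) * ‖y i‖ ^ 2 := by
      rw [hcount, real_inner_self_eq_norm_sq]
      congr 2
      simp only [and_self]
      exact maurey_count_one S m (by omega) hi
    rw [hdiag]
    have hoff : ∀ j ∈ S.erase i, ∑ T ∈ S.powersetCard m,
          (if i ∈ T ∧ j ∈ T then (inner ℝ (y i) (y j) : ℝ) else 0)
        = ((S.card - 2).choose (m - 2) : ℝ) * (inner ℝ (y i) (y j) : ℝ) := by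
      intro j hj
      rw [hcount, maurey_count_two S m hm hi (Finset.mem_of_mem_erase hj)
        (Finset.ne_of_mem_erase hj).symm]
    rw [Finset.sum_congr rfl hoff, ← Finset.mul_sum, ← inner_sum]
    have : ∑ j ∈ S.erase i, y j = - y i := by
      rw [Finset.sum_erase_eq_sub hi, hy]; abel
    rw [this, inner_neg_right, real_inner_self_eq_norm_sq, pascal]
    ring
  rw [Finset.sum_congr rfl hper, ← Finset.mul_sum]

/-- Maurey lemma for centroids in a real inner product space: a finite set `S` of
`n ≥ 2` points can be partitioned into halves `S₁, S₂` of sizes `⌊n/2⌋, ⌈n/2⌉`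
with `‖c(S₁) − c(S₂)‖ ≤ √2 · ⌈n/2⌉^{−1/2} · diam S`. -/
theorem maurey_centroid_hilbert {X : Type*} [DecidableEq X] [NormedAddCommGroup X] [InnerProductSpace ℝ X]
    (S : Finset X) (hS : 2 ≤ S.card) :
    ∃ S₁ S₂ : Finset X, Disjoint S₁ S₂ ∧ S₁ ∪ S₂ = S ∧
      S₁.card = S.card / 2 ∧ S₂.card = (S.card + 1) / 2 ∧
      ‖(S₁.card : ℝ)⁻¹ • ∑ x ∈ S₁, x - (S₂.card : ℝ)⁻¹ • ∑ x ∈ S₂, x‖ ≤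
        Real.sqrt 2 / Real.sqrt (((S.card + 1) / 2 : ℕ) : ℝ) * Metric.diam (S : Set X) := by
  classical
  have hbdd : Bornology.IsBounded (S : Set X) := (S.finite_toSet).isBounded
  have hd : 0 ≤ Metric.diam (S : Set X) := Metric.diam_nonneg
  set d := Metric.diam (S : Set X) with hd_def
  have hdiam : ∀ x ∈ S, ∀ z ∈ S, ‖x - z‖ ≤ d := by
    intro x hx z hz
    rw [← dist_eq_norm]
    exact Metric.dist_le_diam_of_mem hbdd (by exact_mod_cast hx) (by exact_mod_cast hz)
  rcases eq_or_lt_of_le hS with h2 | h3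
  · -- base case: S.card = 2
    obtain ⟨a, ha, b, hb, hab⟩ := Finset.one_lt_card.mp (show 1 < S.card by omega)
    have hSab : S = {a, b} := by
      apply (Finset.eq_of_subset_of_card_le ?_ ?_).symm
      · intro x hx
        rcases Finset.mem_insert.mp hx with h | h
        · exact h ▸ ha
        · exact (Finset.mem_singleton.mp h) ▸ hb
      · rw [Finset.card_insert_of_notMem (by simpa using hab), Finset.card_singleton]; omega
    refine ⟨{a}, {b}, by simp [hab, hab.symm], ?_, by simp [Finset.card_singleton, ← h2], by simp [Finset.card_singleton, ← h2], ?_⟩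
    · rw [hSab]; ext x; simp
    · simp only [Finset.card_singleton, Nat.cast_one, inv_one, one_smul, Finset.sum_singleton]
      rw [show ((S.card + 1) / 2 : ℕ) = 1 by omega]
      have h1 : ‖a - b‖ ≤ d := hdiam a ha b hb
      have h2' : (1:ℝ) ≤ Real.sqrt 2 / Real.sqrt 1 := by
        rw [Real.sqrt_one, div_one]
        nlinarith [Real.sq_sqrt (by norm_num : (2:ℝ) ≥ 0), Real.sqrt_nonneg 2]
      calc ‖a - b‖ ≤ d := h1
        _ = 1 * d := (one_mul d).symm
        _ ≤ Real.sqrt 2 / Real.sqrt 1 * d := by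
            exact mul_le_mul_of_nonneg_right h2' hd
        _ = Real.sqrt 2 / Real.sqrt ((1:ℕ) : ℝ) * d := by norm_num
  · -- main case: S.card ≥ 3
    set n := S.card with hn_def
    have hn3 : 3 ≤ n := h3
    set m := (n + 1) / 2 with hm_def
    set k := n / 2 with hk_def
    have hk1 : 1 ≤ k := by omega
    have hm2 : 2 ≤ m := by omega
    have hkm : k + m = n := by omega
    have hmn : m ≤ n := by omega
    have hn4k : n ≤ 4 * k := by omega
    -- the centered points
    set c : X := (n : ℝ)⁻¹ • ∑ x ∈ S, x with hc_def
    set y : X → X := fun x => x - c with hy_def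
    have hy : ∑ x ∈ S, y x = 0 := by
      simp only [hy_def, Finset.sum_sub_distrib, Finset.sum_const, hc_def]
      rw [← hn_def, ← Nat.cast_smul_eq_nsmul ℝ, smul_smul]
      rw [mul_inv_cancel₀ (by positivity : (n:ℝ) ≠ 0), one_smul, sub_self]
    set Q : ℝ := ∑ x ∈ S, ‖y x‖ ^ 2 with hQ_def
    have hQ0 : 0 ≤ Q := Finset.sum_nonneg fun x _ => by positivity
    -- variance bound
    have hQ : 2 * (n:ℝ) * Q ≤ (n:ℝ) * ((n:ℝ) - 1) * d ^ 2 := by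
      have expand : ∑ i ∈ S, ∑ j ∈ S, ‖i - j‖ ^ 2 = 2 * (n:ℝ) * Q := by
        have hper : ∀ i ∈ S, ∑ j ∈ S, ‖i - j‖ ^ 2
            = (n:ℝ) * ‖y i‖ ^ 2 + Q - 2 * (inner ℝ (y i) (∑ x ∈ S, y x) : ℝ) := by
          intro i hi
          have hij : ∀ j ∈ S, ‖i - j‖ ^ 2
              = ‖y i‖ ^ 2 - 2 * (inner ℝ (y i) (y j) : ℝ) + ‖y j‖ ^ 2 := by
            intro j hj
            rw [show i - j = y i - y j by simp [hy_def]]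
            exact norm_sub_sq_real _ _
          rw [Finset.sum_congr rfl hij]
          simp only [Finset.sum_add_distrib, Finset.sum_sub_distrib, Finset.sum_const,
            inner_sum, Finset.mul_sum]
          rw [← hn_def, nsmul_eq_mul]
          ring
        rw [Finset.sum_congr rfl hper, hy]
        simp only [inner_zero_right, mul_zero, sub_zero]
        rw [Finset.sum_add_distrib, Finset.sum_const, ← Finset.mul_sum, ← hn_def,
          nsmul_eq_mul, ← hQ_def]
        ring
      have bound : ∑ i ∈ S, ∑ j ∈ S, ‖i - j‖ ^ 2
          ≤ ∑ i ∈ S, ∑ j ∈ S, (if i = j then 0 else d ^ 2) := by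
        refine Finset.sum_le_sum fun i hi => Finset.sum_le_sum fun j hj => ?_
        by_cases hij : i = j
        · simp [hij]
        · simp only [hij, if_false]
          have := hdiam i hi j hj
          nlinarith [norm_nonneg (i - j)]
      have count : ∑ i ∈ S, ∑ j ∈ S, (if i = j then 0 else d ^ 2)
          = (n:ℝ) * ((n:ℝ) - 1) * d ^ 2 := by
        have hper : ∀ i ∈ S, ∑ j ∈ S, (if i = j then 0 else d ^ 2)
            = ((n:ℝ) - 1) * d ^ 2 := by
          intro i hi
          rw [← Finset.add_sum_erase _ _ hi, if_pos rfl, zero_add]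
          rw [Finset.sum_congr rfl (fun j hj => if_neg (Finset.ne_of_mem_erase hj).symm)]
          rw [Finset.sum_const, nsmul_eq_mul, Finset.card_erase_of_mem hi, ← hn_def]
          have : ((n - 1 : ℕ) : ℝ) = (n:ℝ) - 1 := by
            push_cast [Nat.cast_sub (by omega : 1 ≤ n)]; ring
          rw [this]
        rw [Finset.sum_congr rfl hper, Finset.sum_const, nsmul_eq_mul, ← hn_def]
        ring
      calc 2 * (n:ℝ) * Q = ∑ i ∈ S, ∑ j ∈ S, ‖i - j‖ ^ 2 := expand.symm
        _ ≤ ∑ i ∈ S, ∑ j ∈ S, (if i = j then 0 else d ^ 2) := bound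
        _ = (n:ℝ) * ((n:ℝ) - 1) * d ^ 2 := count
    -- the averaging
    set CP : ℕ := (n - 2).choose (m - 1) with hCP_def
    set N : ℕ := n.choose m with hN_def
    have hNpos : 0 < N := Nat.choose_pos hmn
    have hTne : (S.powersetCard m).Nonempty := Finset.powersetCard_nonempty.mpr hmn
    -- choose identity: m * k * N = n * (n-1) * CP
    have choose_id : m * k * N = n * (n - 1) * CP := by
      have f1 : n * (n-1).choose (k-1) = n.choose k * k := by
        have := Nat.add_one_mul_choose_eq (n-1) (k-1)
        rw [show n-1+1 = n by omega, show k-1+1 = k by omega] at this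
        exact this
      have f2 : (n-1) * (n-2).choose (m-1) = (n-1).choose m * m := by
        have := Nat.add_one_mul_choose_eq (n-2) (m-1)
        rw [show n-2+1 = n-1 by omega, show m-1+1 = m by omega] at this
        exact this
      have f3 : (n-1).choose (k-1) = (n-1).choose m := by
        rw [← Nat.choose_symm (show m ≤ n-1 by omega)]
        congr 1; omega
      have f4 : n.choose k = N := by
        rw [hN_def, ← Nat.choose_symm (show m ≤ n by omega)]
        congr 1; omega
      calc m * k * N = m * (n.choose k * k) := by rw [f4]; ring
        _ = m * (n * (n-1).choose (k-1)) := by rw [f1]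
        _ = n * ((n-1).choose m * m) := by rw [f3]; ring
        _ = n * ((n-1) * CP) := by rw [f2]
        _ = n * (n - 1) * CP := by ring
    -- per-subset formula
    have hD : ∀ T ∈ S.powersetCard m,
        ((k:ℝ)⁻¹ • ∑ x ∈ S \ T, x - (m:ℝ)⁻¹ • ∑ x ∈ T, x)
          = (-((n:ℝ)/((k:ℝ)*(m:ℝ)))) • ∑ x ∈ T, y x := by
      intro T hT
      rw [Finset.mem_powersetCard] at hT
      have hsd : ∑ x ∈ S \ T, x = ∑ x ∈ S, x - ∑ x ∈ T, x := Finset.sum_sdiff_eq_sub hT.1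
      have hsT : ∑ x ∈ T, y x = ∑ x ∈ T, x - (m:ℝ) • c := by
        simp only [hy_def, Finset.sum_sub_distrib, Finset.sum_const, hT.2]
        rw [← Nat.cast_smul_eq_nsmul ℝ]
      rw [hsd, hsT, hc_def]
      have hk0 : (k:ℝ) ≠ 0 := by positivity
      have hm0 : (m:ℝ) ≠ 0 := by positivity
      have hn0 : (n:ℝ) ≠ 0 := by positivity
      have hkmR : (k:ℝ) + (m:ℝ) = (n:ℝ) := by exact_mod_cast congrArg (Nat.cast : ℕ → ℝ) hkm
      rw [← hkmR]
      match_scalars <;> field_simp <;> ring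
    -- total bound
    have total : ∑ T ∈ S.powersetCard m, ‖(k:ℝ)⁻¹ • ∑ x ∈ S \ T, x - (m:ℝ)⁻¹ • ∑ x ∈ T, x‖ ^ 2
        ≤ ∑ T ∈ S.powersetCard m, (2 / (m:ℝ) * d ^ 2) := by
      have heq : ∀ T ∈ S.powersetCard m,
          ‖(k:ℝ)⁻¹ • ∑ x ∈ S \ T, x - (m:ℝ)⁻¹ • ∑ x ∈ T, x‖ ^ 2
            = ((n:ℝ)/((k:ℝ)*(m:ℝ))) ^ 2 * ‖∑ x ∈ T, y x‖ ^ 2 := by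
        intro T hT
        rw [hD T hT, norm_smul]
        rw [Real.norm_eq_abs, abs_neg, abs_of_nonneg (by positivity)]
        ring
      rw [Finset.sum_congr rfl heq, ← Finset.mul_sum, maurey_key_identity S y hy m hm2 hmn,
        ← hQ_def, ← hCP_def, Finset.sum_const, nsmul_eq_mul, Finset.card_powersetCard,
        ← hn_def, ← hN_def]
      -- now pure real arithmetic
      have hidR : (m:ℝ) * k * N = (n:ℝ) * ((n:ℝ) - 1) * CP := by
        have := congrArg (Nat.cast : ℕ → ℝ) choose_id
        push_cast [Nat.cast_sub (by omega : 1 ≤ n)] at this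
        convert this using 2 <;> push_cast <;> ring
      have hk0 : (0:ℝ) < k := by positivity
      have hm0 : (0:ℝ) < m := by positivity
      have hn0 : (0:ℝ) < n := by positivity
      have hN0 : (0:ℝ) < N := by exact_mod_cast hNpos
      have hCP0 : (0:ℝ) ≤ CP := Nat.cast_nonneg _
      have h4k : (n:ℝ) ≤ 4 * k := by exact_mod_cast hn4k
      rw [div_pow, div_mul_eq_mul_div, div_le_iff₀ (by positivity)]
      -- (n^2 * (CP * Q)) ≤ N * (2/m * d^2) * (k*m)^2
      have hQ' : Q ≤ ((n:ℝ) - 1) * d ^ 2 / 2 := by nlinarith [hQ, hn0]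
      calc (n:ℝ)^2 * ((CP:ℝ) * Q) ≤ (n:ℝ)^2 * ((CP:ℝ) * (((n:ℝ) - 1) * d ^ 2 / 2)) := by
            exact mul_le_mul_of_nonneg_left (mul_le_mul_of_nonneg_left hQ' hCP0) (by positivity)
        _ = ((n:ℝ) * ((n:ℝ) - 1) * (CP:ℝ)) * ((n:ℝ) * d ^ 2 / 2) := by ring
        _ = ((m:ℝ) * (k:ℝ) * (N:ℝ)) * ((n:ℝ) * d ^ 2 / 2) := by rw [← hidR]
        _ ≤ ((m:ℝ) * (k:ℝ) * (N:ℝ)) * ((4 * (k:ℝ)) * d ^ 2 / 2) := by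
            apply mul_le_mul_of_nonneg_left _ (by positivity)
            apply div_le_div_of_nonneg_right ?_ (by norm_num)
            exact mul_le_mul_of_nonneg_right h4k (sq_nonneg d)
        _ = (N:ℝ) * (2 / (m:ℝ) * d ^ 2) * ((k:ℝ) * (m:ℝ)) ^ 2 := by
            field_simp; ring
    obtain ⟨T, hTmem, hTle⟩ := Finset.exists_le_of_sum_le hTne total
    rw [Finset.mem_powersetCard] at hTmem
    refine ⟨S \ T, T, Finset.sdiff_disjoint, Finset.sdiff_union_of_subset hTmem.1, ?_, ?_, ?_⟩
    · rw [Finset.card_sdiff_of_subset hTmem.1, hTmem.2]; omega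
    · exact hTmem.2
    · rw [Finset.card_sdiff_of_subset hTmem.1, hTmem.2, ← hn_def, show n - m = k by omega]
      have hnorm : ‖(k:ℝ)⁻¹ • ∑ x ∈ S \ T, x - (m:ℝ)⁻¹ • ∑ x ∈ T, x‖
          ≤ Real.sqrt (2 / (m:ℝ) * d ^ 2) := by
        rw [← Real.sqrt_sq (norm_nonneg _)]
        exact Real.sqrt_le_sqrt hTle
      calc ‖(k:ℝ)⁻¹ • ∑ x ∈ S \ T, x - (m:ℝ)⁻¹ • ∑ x ∈ T, x‖
          ≤ Real.sqrt (2 / (m:ℝ) * d ^ 2) := hnorm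
        _ = Real.sqrt 2 / Real.sqrt (m:ℝ) * d := by
            rw [Real.sqrt_mul (by positivity), Real.sqrt_sq hd, Real.sqrt_div (by norm_num)]
        _ = Real.sqrt 2 / Real.sqrt (((n + 1) / 2 : ℕ) : ℝ) * d := by rw [← hm_def]
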